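/- Assume the sign-coherence of C-matrices: for every skew-symmetrizable initial integer matrix and every path, the associated C-matrix is column sign-coherent. Let B be a skew-symmetrizable n×n integer matrix and let t be reached from t_0 by a path with all directions in {1,…,n}. Then the 2n×2n C-matrix of the principal extension is block diagonal: C^{B̄;t_0}_t = [[C^{B;t_0}_t, O], [O, I_n]]. -/

import Mathlib

open Matrix

section Defs

variable {ι : Type} [Fintype ι] [DecidableEq ι]
variable {R : Type} [CommRing R] [LinearOrder R] [IsStrictOrderedRing R]

/-- Entrywise positive part `[A]₊`. -/
def matPos (A : Matrix ι ι R) : Matrix ι ι R := fun i j => max (A i j) 0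

/-- `A^{k•}`: the matrix keeping only the `k`-th row of `A`. -/
def rowSel (k : ι) (A : Matrix ι ι R) : Matrix ι ι R := fun i j => if i = k then A i j else 0

/-- `A^{•k}`: the matrix keeping only the `k`-th column of `A`. -/
def colSel (k : ι) (A : Matrix ι ι R) : Matrix ι ι R := fun i j => if j = k then A i j else 0

/-- Entrywise maximum of two matrices. -/
def emax (A B : Matrix ι ι R) : Matrix ι ι R := fun i j => max (A i j) (B i j)

/-- `J_ℓ`: identity matrix with `(ℓ,ℓ)` entry replaced by `-1`. -/
def Jmat (ℓ : ι) : Matrix ι ι R := Matrix.diagonal fun i => if i = ℓ then -1 else 1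

/-- Matrix mutation `μ_k(B)` in direction `k`. -/
def mutate (B : Matrix ι ι R) (k : ι) : Matrix ι ι R := fun i j =>
  if i = k ∨ j = k then -(B i j)
  else B i j + max (B i k) 0 * B k j + B i k * max (-(B k j)) 0

/-- The data `(B_t, C_t, G_t, F_t)` attached to a vertex. -/
structure SeedData (ι R : Type) where
  B : Matrix ι ι R
  C : Matrix ι ι R
  G : Matrix ι ι R
  F : Matrix ι ι R

/-- One final-seed mutation step in direction `ℓ` (with initial exchange matrix `B0`). -/
def seedStep (B0 : Matrix ι ι R) (s : SeedData ι R) (ℓ : ι) : SeedData ι R where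
  B := mutate s.B ℓ
  C := s.C * (Jmat ℓ + rowSel ℓ (matPos s.B)) + colSel ℓ (matPos (-s.C)) * s.B
  G := s.G * (Jmat ℓ + colSel ℓ (matPos s.B)) - B0 * colSel ℓ (matPos s.C)
  F := s.F * Jmat ℓ + emax (colSel ℓ (matPos s.C) + s.F * colSel ℓ (matPos s.B))
      (colSel ℓ (matPos (-s.C)) + s.F * colSel ℓ (matPos (-s.B)))

/-- The seed data at the endpoint of the path `p` starting from the initial vertex. -/
def seedOf (B0 : Matrix ι ι R) (p : List ι) : SeedData ι R :=
  p.foldl (seedStep B0) ⟨B0, 1, 1, 0⟩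

/-- The exchange matrix `B_t` at the end of the path `p`. -/
def Bpath (B : Matrix ι ι R) (p : List ι) : Matrix ι ι R := (seedOf B p).B

/-- The `C`-matrix `C^{B;t_0}_t` at the end of the path `p`. -/
def Cmat (B : Matrix ι ι R) (p : List ι) : Matrix ι ι R := (seedOf B p).C

/-- The `G`-matrix `G^{B;t_0}_t` at the end of the path `p`. -/
def Gmat (B : Matrix ι ι R) (p : List ι) : Matrix ι ι R := (seedOf B p).G

/-- The `F`-matrix `F^{B;t_0}_t` at the end of the path `p`. -/
def Fmat (B : Matrix ι ι R) (p : List ι) : Matrix ι ι R := (seedOf B p).F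

/-- `B` is skew-symmetrizable: `DB` is skew-symmetric for some positive diagonal `D`. -/
def IsSkewSymmetrizable (B : Matrix ι ι ℤ) : Prop :=
  ∃ d : ι → ℤ, (∀ i, 0 < d i) ∧ (Matrix.diagonal d * B)ᵀ = -(Matrix.diagonal d * B)

/-- Column sign-coherence: every column is nonzero and has all entries of one sign. -/
def ColSignCoherent (A : Matrix ι ι ℤ) : Prop :=
  ∀ j, (∃ i, A i j ≠ 0) ∧ ((∀ i, 0 ≤ A i j) ∨ (∀ i, A i j ≤ 0))

/-- Row sign-coherence: every row is nonzero and has all entries of one sign. -/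
def RowSignCoherent (A : Matrix ι ι ℤ) : Prop :=
  ∀ i, (∃ j, A i j ≠ 0) ∧ ((∀ j, 0 ≤ A i j) ∨ (∀ j, A i j ≤ 0))

/-- `ε` is the column sign `ε_{•ℓ}(A)` of the (sign-coherent, nonzero) `ℓ`-th column of `A`. -/
def IsColSign (ε : ℤ) (A : Matrix ι ι ℤ) (ℓ : ι) : Prop :=
  (ε = 1 ∨ ε = -1) ∧ (∃ i, A i ℓ ≠ 0) ∧ ∀ i, 0 ≤ ε * A i ℓ

/-- `ε` is the row sign `ε_{k•}(A)` of the (sign-coherent, nonzero) `k`-th row of `A`. -/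
def IsRowSign (ε : ℤ) (A : Matrix ι ι ℤ) (k : ι) : Prop :=
  (ε = 1 ∨ ε = -1) ∧ (∃ j, A k j ≠ 0) ∧ ∀ j, 0 ≤ ε * A k j

/-- Sign-coherence of `C`-matrices: for every skew-symmetrizable initial integer matrix and
every path, the associated `C`-matrix is column sign-coherent. -/
def SignCoherenceOfC : Prop :=
  ∀ (κ : Type) [Fintype κ] [DecidableEq κ], ∀ B : Matrix κ κ ℤ,
    IsSkewSymmetrizable B → ∀ p : List κ, ColSignCoherent (Cmat B p)

/-- The principal extension `B̄ = [[B, -I],[I, O]]` of `B`, on the index type `Fin n ⊕ Fin n`. -/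
def pext {n : ℕ} (B : Matrix (Fin n) (Fin n) ℤ) :
    Matrix (Fin n ⊕ Fin n) (Fin n ⊕ Fin n) ℤ :=
  Matrix.fromBlocks B (-1) 1 0

noncomputable section FPolys

/-- The ambient field of rational functions `ℚ(y_i : i ∈ ι)` (fraction field of `ℤ[y_i]`). -/
abbrev FField (ι : Type) := FractionRing (MvPolynomial ι ℤ)

/-- The variable `y_i` inside the fraction field. -/
def yvar (i : ι) : FField ι := algebraMap (MvPolynomial ι ℤ) (FField ι) (MvPolynomial.X i)

/-- One mutation step for the triple `(B_t, C_t, (F_{j;t})_j)`. -/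
def fpolyStep (s : Matrix ι ι ℤ × Matrix ι ι ℤ × (ι → FField ι)) (ℓ : ι) :
    Matrix ι ι ℤ × Matrix ι ι ℤ × (ι → FField ι) :=
  ⟨mutate s.1 ℓ,
   s.2.1 * (Jmat ℓ + rowSel ℓ (matPos s.1)) + colSel ℓ (matPos (-s.2.1)) * s.1,
   fun j => if j = ℓ then
     (s.2.2 ℓ)⁻¹ *
       ((∏ i, yvar i ^ (max (s.2.1 i ℓ) 0).toNat) * (∏ i, s.2.2 i ^ (max (s.1 i ℓ) 0).toNat)
        + (∏ i, yvar i ^ (max (-(s.2.1 i ℓ)) 0).toNat) *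
            (∏ i, s.2.2 i ^ (max (-(s.1 i ℓ)) 0).toNat))
   else s.2.2 j⟩

/-- The `F`-polynomial `F^{B;t_0}_{j;t}` (as an element of the field of rational functions)
at the end of the path `p`. -/
def Fpoly (B : Matrix ι ι ℤ) (p : List ι) : ι → FField ι :=
  (p.foldl fpolyStep ⟨B, 1, fun _ => 1⟩).2.2

/-- The polynomial representing an element of the fraction field (when it is a polynomial). -/
def polyOf (x : FField ι) : MvPolynomial ι ℤ := by
  classical exact
    if h : ∃ q : MvPolynomial ι ℤ, algebraMap (MvPolynomial ι ℤ) (FField ι) q = x then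
      h.choose else 0

/-- The `H`-matrix `H^{B;t_0}_t`: `h_{ij;t}` is the minimum over exponent vectors `a` in the
support of `F^{B;t_0}_{j;t}` of `-a_i + ∑_{l ≠ i} [-b_{il}]₊ a_l`. -/
def Hmat (B : Matrix ι ι ℤ) (p : List ι) : Matrix ι ι ℤ := fun i j =>
  if h : (polyOf (Fpoly B p j)).support.Nonempty then
    (polyOf (Fpoly B p j)).support.inf' h
      (fun a => -(a i : ℤ) + ∑ l ∈ Finset.univ.erase i, max (-(B i l)) 0 * (a l : ℤ))
  else 0

end FPolys

/-- The embedding `ℚ(y_1,…,y_n) → ℚ(y_1,…,y_{2n})` sending `y_i` to `y_i`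
(the second batch of variables indexed by the right summand). -/
noncomputable def embK (n : ℕ) : FField (Fin n) →+* FField (Fin n ⊕ Fin n) :=
  IsFractionRing.lift
    (g := (algebraMap (MvPolynomial (Fin n ⊕ Fin n) ℤ) (FField (Fin n ⊕ Fin n))).comp
      (MvPolynomial.rename (Sum.inl : Fin n → Fin n ⊕ Fin n)).toRingHom)
    (by
      intro a b hab
      simp only [RingHom.coe_comp, Function.comp_apply, AlgHom.toRingHom_eq_coe,
        RingHom.coe_coe] at hab
      exact MvPolynomial.rename_injective _ Sum.inl_injective
        (IsFractionRing.injective (MvPolynomial (Fin n ⊕ Fin n) ℤ)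
          (FField (Fin n ⊕ Fin n)) hab))

/-- `D⁻¹ Cᵀ D` over `ℚ`, for the positive diagonal skew-symmetrizer `D = diagonal d`. -/
noncomputable def dCd {n : ℕ} (d : Fin n → ℤ) (C : Matrix (Fin n) (Fin n) ℤ) :
    Matrix (Fin n) (Fin n) ℚ :=
  (Matrix.diagonal fun i => (d i : ℚ))⁻¹ * (C.map (Int.cast : ℤ → ℚ))ᵀ *
    Matrix.diagonal fun i => (d i : ℚ)

end Defs


section BlockAux
set_option linter.unusedSectionVars false
variable {α β γ : Type} [Fintype α] [DecidableEq α] [Fintype β] [DecidableEq β]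
  [Fintype γ] [DecidableEq γ]

/-- rectangular entrywise positive part -/
def mpos (M : Matrix α β ℤ) : Matrix α β ℤ := fun i j => max (M i j) 0
/-- rectangular row selection -/
def rsel (k : α) (M : Matrix α β ℤ) : Matrix α β ℤ := fun i j => if i = k then M i j else 0
/-- rectangular column selection -/
def csel (k : β) (M : Matrix α β ℤ) : Matrix α β ℤ := fun i j => if j = k then M i j else 0

lemma matPos_eq (A : Matrix α α ℤ) : matPos A = mpos A := rfl
lemma rowSel_eq (k : α) (A : Matrix α α ℤ) : rowSel k A = rsel k A := rfl
lemma colSel_eq (k : α) (A : Matrix α α ℤ) : colSel k A = csel k A := rfl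

lemma mpos_fromBlocks (A : Matrix α α ℤ) (X : Matrix α β ℤ) (C : Matrix β α ℤ)
    (Y : Matrix β β ℤ) :
    mpos (Matrix.fromBlocks A X C Y) = Matrix.fromBlocks (mpos A) (mpos X) (mpos C) (mpos Y) := by
  ext i j; cases i <;> cases j <;> rfl

lemma mpos_zero : mpos (0 : Matrix α β ℤ) = 0 := by
  ext i j; simp [mpos]

lemma csel_zero (k : β) : csel k (0 : Matrix α β ℤ) = 0 := by
  ext i j; simp [csel]

lemma rsel_inl_fromBlocks (k : α) (A : Matrix α α ℤ) (X : Matrix α β ℤ) (C : Matrix β α ℤ)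
    (Y : Matrix β β ℤ) :
    rsel (Sum.inl k) (Matrix.fromBlocks A X C Y)
      = Matrix.fromBlocks (rsel k A) (rsel k X) 0 0 := by
  ext i j; cases i <;> cases j <;> simp [rsel, Matrix.fromBlocks]

lemma csel_inl_fromBlocks (k : α) (A : Matrix α α ℤ) (X : Matrix α β ℤ) (C : Matrix β α ℤ)
    (Y : Matrix β β ℤ) :
    csel (Sum.inl k) (Matrix.fromBlocks A X C Y)
      = Matrix.fromBlocks (csel k A) 0 (csel k C) 0 := by
  ext i j; cases i <;> cases j <;> simp [csel, Matrix.fromBlocks]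

lemma Jmat_inl (k : α) :
    (Jmat (Sum.inl k) : Matrix (α ⊕ β) (α ⊕ β) ℤ) = Matrix.fromBlocks (Jmat k) 0 0 1 := by
  ext i j
  cases i <;> cases j <;>
    simp [Jmat, Matrix.diagonal, Matrix.fromBlocks, Matrix.one_apply]

lemma mul_rsel (k : α) (C : Matrix γ α ℤ) (M : Matrix α β ℤ) :
    C * rsel k M = Matrix.of fun i j => C i k * M k j := by
  ext i j
  simp only [Matrix.mul_apply, rsel, Matrix.of_apply, mul_ite, mul_zero]
  rw [Finset.sum_ite_eq' Finset.univ k (fun m => C i m * M m j)]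
  simp

lemma csel_mul (k : β) (M : Matrix α β ℤ) (Bt : Matrix β γ ℤ) :
    csel k M * Bt = Matrix.of fun i j => M i k * Bt k j := by
  ext i j
  simp only [Matrix.mul_apply, csel, Matrix.of_apply, ite_mul, zero_mul]
  rw [Finset.sum_ite_eq' Finset.univ k (fun m => M i m * Bt m j)]
  simp

lemma key_cancel (a x : ℤ) (h : (0 ≤ a ∧ x ≤ 0) ∨ (a ≤ 0 ∧ 0 ≤ x)) :
    a * max x 0 + max (-a) 0 * x = 0 := by
  rcases h with ⟨ha, hx⟩ | ⟨ha, hx⟩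
  · rw [max_eq_right hx, max_eq_right (neg_nonpos.2 ha)]; ring
  · rw [max_eq_left hx, max_eq_left (neg_nonneg.2 ha)]; ring

lemma key_cancel' (a x : ℤ) (h : (0 ≤ a ∧ x ≤ 0) ∨ (a ≤ 0 ∧ 0 ≤ x)) :
    max a 0 * x + a * max (-x) 0 = 0 := by
  rcases h with ⟨ha, hx⟩ | ⟨ha, hx⟩
  · rw [max_eq_left ha, max_eq_left (neg_nonneg.2 hx)]; ring
  · rw [max_eq_right ha, max_eq_right (neg_nonpos.2 hx)]; ring

lemma exch (a b : ℤ) : a * max b 0 + max (-a) 0 * b = max a 0 * b + a * max (-b) 0 := by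
  rcases le_total a 0 with ha | ha <;> rcases le_total b 0 with hb | hb <;>
    simp [max_eq_left, max_eq_right, neg_nonneg.2, neg_nonpos.2, ha, hb] <;> ring

lemma mutate_inl_fromBlocks (k : α) (A : Matrix α α ℤ) (X : Matrix α β ℤ)
    (C : Matrix β α ℤ) (Y : Matrix β β ℤ) :
    mutate (Matrix.fromBlocks A X C Y) (Sum.inl k)
      = Matrix.fromBlocks (mutate A k)
        (Matrix.of fun i j => if i = k then -(X i j)
          else X i j + max (A i k) 0 * X k j + A i k * max (-(X k j)) 0)
        (Matrix.of fun i j => if j = k then -(C i j)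
          else C i j + max (C i k) 0 * A k j + C i k * max (-(A k j)) 0)
        (Matrix.of fun i j => Y i j + max (C i k) 0 * X k j + C i k * max (-(X k j)) 0) := by
  ext i j
  cases i <;> cases j <;> simp [mutate, Matrix.fromBlocks]

lemma Crec (C Bt : Matrix α α ℤ) (k : α) (hBkk : Bt k k = 0) :
    (Matrix.of fun i j => if j = k then -(C i j)
        else C i j + max (C i k) 0 * Bt k j + C i k * max (-(Bt k j)) 0)
      = C * (Jmat k + rowSel k (matPos Bt)) + colSel k (matPos (-C)) * Bt := by
  have h1 : C * rowSel k (matPos Bt) = Matrix.of fun i j => C i k * max (Bt k j) 0 := by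
    ext i j
    simp only [Matrix.mul_apply, rowSel, matPos, Matrix.of_apply, mul_ite, mul_zero]
    rw [Finset.sum_ite_eq' Finset.univ k (fun m => C i m * max (Bt m j) 0)]; simp
  have h2 : colSel k (matPos (-C)) * Bt = Matrix.of fun i j => max (-(C i k)) 0 * Bt k j := by
    ext i j
    simp only [Matrix.mul_apply, colSel, matPos, Matrix.of_apply, ite_mul, zero_mul,
      Matrix.neg_apply]
    rw [Finset.sum_ite_eq' Finset.univ k (fun m => max (-(C i m)) 0 * Bt m j)]; simp
  ext i j
  rw [Matrix.mul_add, Matrix.add_apply, Matrix.add_apply, h1, h2]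
  have hJ : (C * (Jmat k : Matrix α α ℤ)) i j = C i j * (if j = k then -1 else 1) := by
    simp [Jmat, Matrix.mul_diagonal]
  rw [hJ]
  by_cases hj : j = k
  · subst hj; simp [hBkk]
  · simp only [Matrix.of_apply, if_neg hj, mul_one]
    linear_combination -exch (C i k) (Bt k j)

/-- scalar lemma for skew-preservation, off-diagonal case -/
lemma skew_scalar (di dj dk bij bji bik bki bkj bjk : ℤ)
    (hdi : 0 < di) (hdj : 0 < dj) (hdk : 0 < dk)
    (h1 : di * bij = -(dj * bji)) (h2 : di * bik = -(dk * bki))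
    (h3 : dk * bkj = -(dj * bjk)) :
    di * (bij + max bik 0 * bkj + bik * max (-bkj) 0)
      = -(dj * (bji + max bjk 0 * bki + bjk * max (-bki) 0)) := by
  have key : dk * (di * (bik * bkj)) = dk * (dj * (bjk * bki)) := by
    linear_combination (dk * bkj) * h2 - (dk * bki) * h3
  have key2 := mul_left_cancel₀ hdk.ne' key
  rcases le_total 0 bik with ha | ha <;> rcases le_total 0 bkj with hb | hb
  · have hki : bki ≤ 0 := by nlinarith
    have hjk : bjk ≤ 0 := by nlinarith
    rw [max_eq_left ha, max_eq_right (neg_nonpos.2 hb), max_eq_right hjk,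
      max_eq_left (neg_nonneg.2 hki)]
    linear_combination h1 + key2
  · have hki : bki ≤ 0 := by nlinarith
    have hjk : 0 ≤ bjk := by nlinarith
    rw [max_eq_left ha, max_eq_left (neg_nonneg.2 hb), max_eq_left hjk,
      max_eq_left (neg_nonneg.2 hki)]
    linear_combination h1
  · have hki : 0 ≤ bki := by nlinarith
    have hjk : bjk ≤ 0 := by nlinarith
    rw [max_eq_right ha, max_eq_right (neg_nonpos.2 hb), max_eq_right hjk,
      max_eq_right (neg_nonpos.2 hki)]
    linear_combination h1
  · have hki : 0 ≤ bki := by nlinarith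
    have hjk : 0 ≤ bjk := by nlinarith
    rw [max_eq_right ha, max_eq_left (neg_nonneg.2 hb), max_eq_left hjk,
      max_eq_right (neg_nonpos.2 hki)]
    linear_combination h1 - key2

/-- scalar lemma for the `X`-block invariant, `i ≠ k` case -/
lemma X_scalar (di dj dk xij cji bik bki xkj cjk : ℤ)
    (hdi : 0 < di) (hdj : 0 < dj) (hdk : 0 < dk)
    (h1 : di * xij = -(dj * cji)) (h2 : di * bik = -(dk * bki))
    (h3 : dk * xkj = -(dj * cjk)) :
    di * (xij + max bik 0 * xkj + bik * max (-xkj) 0)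
      = -(dj * (cji + max cjk 0 * bki + cjk * max (-bki) 0)) := by
  have key : dk * (di * (bik * xkj)) = dk * (dj * (cjk * bki)) := by
    linear_combination (dk * xkj) * h2 - (dk * bki) * h3
  have key2 := mul_left_cancel₀ hdk.ne' key
  rcases le_total 0 bik with ha | ha <;> rcases le_total 0 xkj with hb | hb
  · have hki : bki ≤ 0 := by nlinarith
    have hjk : cjk ≤ 0 := by nlinarith
    rw [max_eq_left ha, max_eq_right (neg_nonpos.2 hb), max_eq_right hjk,
      max_eq_left (neg_nonneg.2 hki)]
    linear_combination h1 + key2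
  · have hki : bki ≤ 0 := by nlinarith
    have hjk : 0 ≤ cjk := by nlinarith
    rw [max_eq_left ha, max_eq_left (neg_nonneg.2 hb), max_eq_left hjk,
      max_eq_left (neg_nonneg.2 hki)]
    linear_combination h1
  · have hki : 0 ≤ bki := by nlinarith
    have hjk : cjk ≤ 0 := by nlinarith
    rw [max_eq_right ha, max_eq_right (neg_nonpos.2 hb), max_eq_right hjk,
      max_eq_right (neg_nonpos.2 hki)]
    linear_combination h1
  · have hki : 0 ≤ bki := by nlinarith
    have hjk : 0 ≤ cjk := by nlinarith
    rw [max_eq_right ha, max_eq_left (neg_nonneg.2 hb), max_eq_left hjk,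
      max_eq_right (neg_nonpos.2 hki)]
    linear_combination h1 - key2

lemma skew_mutate {ι : Type} [Fintype ι] [DecidableEq ι] (d : ι → ℤ) (hd : ∀ i, 0 < d i)
    (Bt : Matrix ι ι ℤ) (hs : ∀ i j, d i * Bt i j = -(d j * Bt j i)) (k : ι) :
    ∀ i j, d i * mutate Bt k i j = -(d j * mutate Bt k j i) := by
  intro i j
  by_cases hc : i = k ∨ j = k
  · have hc' : j = k ∨ i = k := hc.symm
    simp only [mutate, if_pos hc, if_pos hc']
    linarith [hs i j]
  · have hc' : ¬(j = k ∨ i = k) := fun h => hc h.symm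
    simp only [mutate, if_neg hc, if_neg hc']
    exact skew_scalar (d i) (d j) (d k) (Bt i j) (Bt j i) (Bt i k) (Bt k i) (Bt k j) (Bt j k)
      (hd i) (hd j) (hd k) (hs i j) (hs i k) (hs k j)

lemma seedOf_concat {ι : Type} [Fintype ι] [DecidableEq ι] (B0 : Matrix ι ι ℤ)
    (q : List ι) (k : ι) :
    seedOf B0 (q ++ [k]) = seedStep B0 (seedOf B0 q) k := by
  simp [seedOf, List.foldl_append]

lemma pext_invariant (hsc : SignCoherenceOfC) {n : ℕ}
    (B : Matrix (Fin n) (Fin n) ℤ) (hB : IsSkewSymmetrizable B) (d : Fin n → ℤ)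
    (hd : ∀ i, 0 < d i)
    (hskew : ∀ i j, d i * B i j = -(d j * B j i)) (p : List (Fin n)) :
    (∀ i j, d i * (seedOf B p).B i j = -(d j * (seedOf B p).B j i)) ∧
    ∃ X : Matrix (Fin n) (Fin n) ℤ,
      (∀ i j, d i * X i j = -(d j * (seedOf B p).C j i)) ∧
      (seedOf (pext B) (p.map Sum.inl)).B
        = Matrix.fromBlocks (seedOf B p).B X (seedOf B p).C 0 ∧
      (seedOf (pext B) (p.map Sum.inl)).C
        = Matrix.fromBlocks (seedOf B p).C 0 0 1 := by
  induction p using List.reverseRecOn with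
  | nil =>
      refine ⟨hskew, -1, ?_, ?_, ?_⟩
      · intro i j
        show d i * (-1 : Matrix (Fin n) (Fin n) ℤ) i j
            = -(d j * (1 : Matrix (Fin n) (Fin n) ℤ) j i)
        by_cases h : i = j <;>
          simp [Matrix.one_apply, Matrix.neg_apply, h, eq_comm]
      · exact rfl
      · exact Matrix.fromBlocks_one.symm
  | append_singleton q k ih =>
      obtain ⟨hs, X, hX, hBb, hCb⟩ := ih
      set s := seedOf B q with hsdef
      -- column sign coherence of s.C at column k
      have hcol : (∀ i, 0 ≤ s.C i k) ∨ (∀ i, s.C i k ≤ 0) := (hsc (Fin n) B hB q k).2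
      have hsgn : ∀ i j, (0 ≤ s.C i k ∧ X k j ≤ 0) ∨ (s.C i k ≤ 0 ∧ 0 ≤ X k j) := by
        intro i j
        rcases hcol with h | h
        · exact Or.inl ⟨h i, by nlinarith [hX k j, hd k, hd j, h j]⟩
        · exact Or.inr ⟨h i, by nlinarith [hX k j, hd k, hd j, h j]⟩
      have hBkk : s.B k k = 0 := by
        have h0 : d k * s.B k k = 0 := by linarith [hs k k]
        exact (mul_eq_zero.mp h0).resolve_left (hd k).ne'
      rw [seedOf_concat, List.map_append, List.map_cons, List.map_nil, seedOf_concat]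
      -- the new B and C of the base seed
      have hCnewdef : (seedStep B s k).C
          = s.C * (Jmat k + rowSel k (matPos s.B)) + colSel k (matPos (-s.C)) * s.B := rfl
      have hCrec : (seedStep B s k).C = Matrix.of fun i j => if j = k then -(s.C i j)
          else s.C i j + max (s.C i k) 0 * s.B k j + s.C i k * max (-(s.B k j)) 0 := by
        rw [hCnewdef, ← Crec s.C s.B k hBkk]
      -- refine the invariant
      refine ⟨skew_mutate d hd s.B hs k, ?_⟩
      refine ⟨Matrix.of fun i j => if i = k then -(X i j)
          else X i j + max (s.B i k) 0 * X k j + s.B i k * max (-(X k j)) 0, ?_, ?_, ?_⟩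
      · intro i j
        rw [hCrec]
        by_cases hi : i = k
        · rw [hi]
          simp only [Matrix.of_apply, reduceIte]
          linarith [hX k j]
        · simp only [Matrix.of_apply, if_neg hi]
          exact X_scalar (d i) (d j) (d k) (X i j) (s.C j i) (s.B i k) (s.B k i) (X k j)
            (s.C j k) (hd i) (hd j) (hd k) (hX i j) (hs i k) (hX k j)
      · -- the mutated extended B matrix
        show mutate (seedOf (pext B) (q.map Sum.inl)).B (Sum.inl k) = _
        rw [hBb, mutate_inl_fromBlocks]
        have hY : (Matrix.of fun i j => (0 : Matrix (Fin n) (Fin n) ℤ) i j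
            + max (s.C i k) 0 * X k j + s.C i k * max (-(X k j)) 0) = 0 := by
          ext i j
          simp only [Matrix.of_apply, Matrix.zero_apply, zero_add]
          exact key_cancel' (s.C i k) (X k j) (hsgn i j)
        rw [hY, ← hCrec]
        rfl
      · -- the new extended C matrix
        show (seedOf (pext B) (q.map Sum.inl)).C
            * (Jmat (Sum.inl k) + rowSel (Sum.inl k) (matPos (seedOf (pext B) (q.map Sum.inl)).B))
            + colSel (Sum.inl k) (matPos (-(seedOf (pext B) (q.map Sum.inl)).C))
              * (seedOf (pext B) (q.map Sum.inl)).B = _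
        rw [hCb, hBb]
        have hneg : -Matrix.fromBlocks s.C 0 0 (1 : Matrix (Fin n) (Fin n) ℤ)
            = Matrix.fromBlocks (-s.C) 0 0 (-1) := by
          simp [Matrix.fromBlocks_neg]
        rw [hneg, matPos_eq, matPos_eq, mpos_fromBlocks, mpos_fromBlocks,
          rowSel_eq, colSel_eq, rsel_inl_fromBlocks, csel_inl_fromBlocks, mpos_zero,
          csel_zero, Jmat_inl, Matrix.fromBlocks_add, Matrix.fromBlocks_multiply,
          Matrix.fromBlocks_multiply, Matrix.fromBlocks_add]
        simp only [Matrix.mul_zero, Matrix.zero_mul, Matrix.mul_one, Matrix.one_mul,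
          add_zero, zero_add]
        have hTR : s.C * rsel k (mpos X) + csel k (mpos (-s.C)) * X = 0 := by
          rw [mul_rsel, csel_mul]
          ext i j
          simp only [Matrix.add_apply, Matrix.of_apply, mpos, Matrix.neg_apply,
            Matrix.zero_apply]
          exact key_cancel (s.C i k) (X k j) (hsgn i j)
        rw [hTR]
        rfl

end BlockAux

/-- with sign-coherence, the `C`-matrix of the principal extension is
block diagonal. -/
theorem pext_Cmat_blockDiagonal (hsc : SignCoherenceOfC) {n : ℕ}
    (B : Matrix (Fin n) (Fin n) ℤ) (hB : IsSkewSymmetrizable B) (p : List (Fin n)) :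
    Cmat (pext B) (p.map Sum.inl) = Matrix.fromBlocks (Cmat B p) 0 0 1 := by
  obtain ⟨d, hd, hsk⟩ := hB
  have hskew : ∀ i j, d i * B i j = -(d j * B j i) := by
    intro i j
    have h := congrFun (congrFun hsk i) j
    simp only [Matrix.transpose_apply, Matrix.diagonal_mul, Matrix.neg_apply] at h
    linarith
  exact (pext_invariant hsc B ⟨d, hd, hsk⟩ d hd hskew p).2.choose_spec.2.2
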